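/- Let 0 < p, q < 1, let H be a complex Hilbert space, and let ρ : P(S²_{pqφ}) → B(H) be a unital star-algebra homomorphism into the bounded operators on H. Then the closed subspaces ker(1 − ρ(f₀)) and ker(ρ(f₁f₋₁ − f₀)) are invariant under ρ(a) for every a ∈ P(S²_{pqφ}), and the orthogonal complement of ker(1 − ρ(f₀)) in H is contained in ker(ρ(f₁f₋₁ − f₀)); consequently H is the orthogonal direct sum of ker(1 − ρ(f₀)) and ker(ρ(f₁f₋₁ − f₀)) ∩ (ker(1 − ρ(f₀)))^⊥. -/

import Mathlib

noncomputable section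

/-- The free algebra ℂ⟨f₁, f₋₁, f₀⟩ (generator 0 is f₁, generator 1 is f₋₁,
generator 2 is f₀). -/
abbrev FreeSphere : Type := FreeAlgebra ℂ (Fin 3)

/-- f₁ in the free algebra. -/
def F1 : FreeSphere := FreeAlgebra.ι ℂ 0
/-- f₋₁ in the free algebra. -/
def Fm1 : FreeSphere := FreeAlgebra.ι ℂ 1
/-- f₀ in the free algebra. -/
def F0 : FreeSphere := FreeAlgebra.ι ℂ 2

/-- The defining relations of P(S²_{pqφ}). -/
inductive sphereRel (p q : ℝ) : FreeSphere → FreeSphere → Prop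
  | rel1 : sphereRel p q (Fm1 * F1)
      ((q : ℂ) • (F1 * Fm1) + ((p : ℂ) - (q : ℂ)) • F0 + ((1 : ℂ) - (p : ℂ)) • 1)
  | rel2 : sphereRel p q (F0 * F1) ((p : ℂ) • (F1 * F0) + ((1 : ℂ) - (p : ℂ)) • F1)
  | rel3 : sphereRel p q (Fm1 * F0) ((p : ℂ) • (F0 * Fm1) + ((1 : ℂ) - (p : ℂ)) • Fm1)
  | rel4 : sphereRel p q ((1 - F0) * (F1 * Fm1 - F0)) 0

/-- The polynomial algebra P(S²_{pqφ}). -/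
abbrev QSphere (p q : ℝ) : Type := RingQuot (sphereRel p q)

/-- The generator f₁ of P(S²_{pqφ}). -/
def f1 (p q : ℝ) : QSphere p q := RingQuot.mkAlgHom ℂ (sphereRel p q) F1
/-- The generator f₋₁ of P(S²_{pqφ}). -/
def fm1 (p q : ℝ) : QSphere p q := RingQuot.mkAlgHom ℂ (sphereRel p q) Fm1
/-- The generator f₀ of P(S²_{pqφ}). -/
def f0 (p q : ℝ) : QSphere p q := RingQuot.mkAlgHom ℂ (sphereRel p q) F0

open scoped InnerProductSpace

lemma ker_invariant (p q : ℝ) {H : Type*} [NormedAddCommGroup H] [InnerProductSpace ℂ H]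
    (ρ : QSphere p q →ₐ[ℂ] (H →L[ℂ] H)) (K : Submodule ℂ H)
    (h1 : ∀ ψ ∈ K, ρ (f1 p q) ψ ∈ K)
    (hm1 : ∀ ψ ∈ K, ρ (fm1 p q) ψ ∈ K)
    (h0 : ∀ ψ ∈ K, ρ (f0 p q) ψ ∈ K) :
    ∀ a : QSphere p q, ∀ ψ ∈ K, ρ a ψ ∈ K := by
  intro a
  obtain ⟨x, rfl⟩ := RingQuot.mkAlgHom_surjective ℂ (sphereRel p q) a
  induction x using FreeAlgebra.induction with
  | grade0 r =>
      intro ψ hψ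
      rw [AlgHom.commutes, AlgHom.commutes, Algebra.algebraMap_eq_smul_one]
      simp only [ContinuousLinearMap.smul_apply, ContinuousLinearMap.one_apply]
      exact K.smul_mem r hψ
  | grade1 i =>
      fin_cases i
      · exact h1
      · exact hm1
      · exact h0
  | mul a b ha hb =>
      intro ψ hψ
      simp only [map_mul, ContinuousLinearMap.mul_apply]
      exact ha _ (hb _ hψ)
  | add a b ha hb =>
      intro ψ hψ
      simp only [map_add, ContinuousLinearMap.add_apply]
      exact K.add_mem (ha _ hψ) (hb _ hψ)



/-- Let ρ : P(S²_{pqφ}) → B(H) be a unital star-algebra homomorphism into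
the bounded operators on a complex Hilbert space H (the star structure of P(S²_{pqφ})
being determined by f₀* = f₀ and f₁* = f₋₁).  Then the closed subspaces
K₁ = ker(1 - ρ(f₀)) and K₂ = ker(ρ(f₁f₋₁ - f₀)) are invariant under all representation
operators, K₁ᗮ ⊆ K₂, and H is the orthogonal direct sum of K₁ and K₂ ∩ K₁ᗮ. -/
theorem sphere_representation_decomposition (p q : ℝ) (hp0 : 0 < p) (hp1 : p < 1)
    (hq0 : 0 < q) (hq1 : q < 1)
    {H : Type*} [NormedAddCommGroup H] [InnerProductSpace ℂ H] [CompleteSpace H]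
    (ρ : QSphere p q →ₐ[ℂ] (H →L[ℂ] H))
    (hstar0 : ContinuousLinearMap.adjoint (ρ (f0 p q)) = ρ (f0 p q))
    (hstar1 : ContinuousLinearMap.adjoint (ρ (f1 p q)) = ρ (fm1 p q)) :
    (IsClosed ((LinearMap.ker ((1 - ρ (f0 p q) : H →L[ℂ] H) : H →ₗ[ℂ] H)) : Set H)) ∧
    (IsClosed ((LinearMap.ker (ρ (f1 p q * fm1 p q - f0 p q) : H →ₗ[ℂ] H)) : Set H)) ∧
    (∀ a : QSphere p q, ∀ ψ ∈ LinearMap.ker ((1 - ρ (f0 p q) : H →L[ℂ] H) : H →ₗ[ℂ] H),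
      ρ a ψ ∈ LinearMap.ker ((1 - ρ (f0 p q) : H →L[ℂ] H) : H →ₗ[ℂ] H)) ∧
    (∀ a : QSphere p q, ∀ ψ ∈ LinearMap.ker (ρ (f1 p q * fm1 p q - f0 p q) : H →ₗ[ℂ] H),
      ρ a ψ ∈ LinearMap.ker (ρ (f1 p q * fm1 p q - f0 p q) : H →ₗ[ℂ] H)) ∧
    ((LinearMap.ker ((1 - ρ (f0 p q) : H →L[ℂ] H) : H →ₗ[ℂ] H))ᗮ ≤
      LinearMap.ker (ρ (f1 p q * fm1 p q - f0 p q) : H →ₗ[ℂ] H)) ∧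
    (LinearMap.ker ((1 - ρ (f0 p q) : H →L[ℂ] H) : H →ₗ[ℂ] H) ⊔
      (LinearMap.ker (ρ (f1 p q * fm1 p q - f0 p q) : H →ₗ[ℂ] H) ⊓
        (LinearMap.ker ((1 - ρ (f0 p q) : H →L[ℂ] H) : H →ₗ[ℂ] H))ᗮ) = ⊤) ∧
    (∀ ψ ∈ LinearMap.ker ((1 - ρ (f0 p q) : H →L[ℂ] H) : H →ₗ[ℂ] H),
      ∀ χ ∈ LinearMap.ker (ρ (f1 p q * fm1 p q - f0 p q) : H →ₗ[ℂ] H) ⊓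
        (LinearMap.ker ((1 - ρ (f0 p q) : H →L[ℂ] H) : H →ₗ[ℂ] H))ᗮ,
      ⟪ψ, χ⟫_ℂ = 0) := by
  -- operator relations
  have e1 : ρ (fm1 p q) * ρ (f1 p q) =
      (q : ℂ) • (ρ (f1 p q) * ρ (fm1 p q)) + ((p : ℂ) - (q : ℂ)) • ρ (f0 p q)
        + ((1 : ℂ) - (p : ℂ)) • 1 := by
    have h := congrArg ρ (RingQuot.mkAlgHom_rel ℂ (sphereRel.rel1 (p := p) (q := q)))
    simp only [f0, f1, fm1, map_mul, map_add, map_smul, map_one] at h ⊢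
    exact h
  have e2 : ρ (f0 p q) * ρ (f1 p q) =
      (p : ℂ) • (ρ (f1 p q) * ρ (f0 p q)) + ((1 : ℂ) - (p : ℂ)) • ρ (f1 p q) := by
    have h := congrArg ρ (RingQuot.mkAlgHom_rel ℂ (sphereRel.rel2 (p := p) (q := q)))
    simp only [f0, f1, fm1, map_mul, map_add, map_smul] at h ⊢
    exact h
  have e3 : ρ (fm1 p q) * ρ (f0 p q) =
      (p : ℂ) • (ρ (f0 p q) * ρ (fm1 p q)) + ((1 : ℂ) - (p : ℂ)) • ρ (fm1 p q) := by
    have h := congrArg ρ (RingQuot.mkAlgHom_rel ℂ (sphereRel.rel3 (p := p) (q := q)))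
    simp only [f0, f1, fm1, map_mul, map_add, map_smul] at h ⊢
    exact h
  have e4 : (1 - ρ (f0 p q)) * ρ (f1 p q * fm1 p q - f0 p q) = 0 := by
    have h := congrArg ρ (RingQuot.mkAlgHom_rel ℂ (sphereRel.rel4 (p := p) (q := q)))
    simp only [f0, f1, fm1, map_mul, map_sub, map_one, map_zero] at h ⊢
    exact h
  -- vector versions
  have e1v : ∀ v : H, ρ (fm1 p q) (ρ (f1 p q) v) =
      (q : ℂ) • ρ (f1 p q) (ρ (fm1 p q) v) + ((p : ℂ) - (q : ℂ)) • ρ (f0 p q) v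
        + ((1 : ℂ) - (p : ℂ)) • v := by
    intro v
    have h := ContinuousLinearMap.ext_iff.mp e1 v
    simpa using h
  have e2v : ∀ v : H, ρ (f0 p q) (ρ (f1 p q) v) =
      (p : ℂ) • ρ (f1 p q) (ρ (f0 p q) v) + ((1 : ℂ) - (p : ℂ)) • ρ (f1 p q) v := by
    intro v
    have h := ContinuousLinearMap.ext_iff.mp e2 v
    simpa using h
  have e3v : ∀ v : H, ρ (fm1 p q) (ρ (f0 p q) v) =
      (p : ℂ) • ρ (f0 p q) (ρ (fm1 p q) v) + ((1 : ℂ) - (p : ℂ)) • ρ (fm1 p q) v := by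
    intro v
    have h := ContinuousLinearMap.ext_iff.mp e3 v
    simpa using h
  have hBv : ∀ v : H, ρ (f1 p q * fm1 p q - f0 p q) v =
      ρ (f1 p q) (ρ (fm1 p q) v) - ρ (f0 p q) v := by
    intro v; simp [map_sub, map_mul]
  have hran : ∀ v : H, ρ (f1 p q * fm1 p q - f0 p q) v ∈ LinearMap.ker ((1 - ρ (f0 p q) : H →L[ℂ] H) : H →ₗ[ℂ] H) := by
    intro v
    rw [LinearMap.mem_ker]
    have h := ContinuousLinearMap.ext_iff.mp e4 v
    simpa using h
  have hp : (p : ℂ) ≠ 0 := by exact_mod_cast hp0.ne'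
  have hq : (q : ℂ) ≠ 0 := by exact_mod_cast hq0.ne'
  -- closedness
  have hclosed1 : IsClosed ((LinearMap.ker ((1 - ρ (f0 p q) : H →L[ℂ] H) : H →ₗ[ℂ] H)) : Set H) :=
    ContinuousLinearMap.isClosed_ker _
  have hclosed2 : IsClosed ((LinearMap.ker (ρ (f1 p q * fm1 p q - f0 p q) : H →ₗ[ℂ] H)) : Set H) :=
    ContinuousLinearMap.isClosed_ker _
  -- invariance of K₁
  have hinv1 : ∀ a : QSphere p q, ∀ ψ ∈ LinearMap.ker ((1 - ρ (f0 p q) : H →L[ℂ] H) : H →ₗ[ℂ] H),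
      ρ a ψ ∈ LinearMap.ker ((1 - ρ (f0 p q) : H →L[ℂ] H) : H →ₗ[ℂ] H) := by
    apply ker_invariant
    · intro ψ hψ
      rw [LinearMap.mem_ker, ContinuousLinearMap.coe_coe] at hψ ⊢
      have hψ' : ρ (f0 p q) ψ = ψ := by
        have : ψ - ρ (f0 p q) ψ = 0 := by simpa using hψ
        exact (sub_eq_zero.mp this).symm
      simp only [ContinuousLinearMap.sub_apply, ContinuousLinearMap.one_apply]
      rw [e2v, hψ']
      module
    · intro ψ hψ
      rw [LinearMap.mem_ker, ContinuousLinearMap.coe_coe] at hψ ⊢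
      have hψ' : ρ (f0 p q) ψ = ψ := by
        have : ψ - ρ (f0 p q) ψ = 0 := by simpa using hψ
        exact (sub_eq_zero.mp this).symm
      have h3 := e3v ψ
      rw [hψ'] at h3
      have h4 : (p : ℂ) • ρ (f0 p q) (ρ (fm1 p q) ψ) = (p : ℂ) • ρ (fm1 p q) ψ := by
        linear_combination (norm := module) -h3
      have h5 : ρ (f0 p q) (ρ (fm1 p q) ψ) = ρ (fm1 p q) ψ := smul_right_injective H hp h4
      simp only [ContinuousLinearMap.sub_apply, ContinuousLinearMap.one_apply, h5, sub_self]
    · intro ψ hψ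
      rw [LinearMap.mem_ker, ContinuousLinearMap.coe_coe] at hψ ⊢
      have hψ' : ρ (f0 p q) ψ = ψ := by
        have : ψ - ρ (f0 p q) ψ = 0 := by simpa using hψ
        exact (sub_eq_zero.mp this).symm
      simp only [ContinuousLinearMap.sub_apply, ContinuousLinearMap.one_apply, hψ', sub_self]
  -- invariance of K₂
  have hinv2 : ∀ a : QSphere p q, ∀ ψ ∈ LinearMap.ker (ρ (f1 p q * fm1 p q - f0 p q) : H →ₗ[ℂ] H),
      ρ a ψ ∈ LinearMap.ker (ρ (f1 p q * fm1 p q - f0 p q) : H →ₗ[ℂ] H) := by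
    apply ker_invariant
    · intro ψ hψ
      rw [LinearMap.mem_ker, ContinuousLinearMap.coe_coe] at hψ ⊢
      have hψ' : ρ (f1 p q) (ρ (fm1 p q) ψ) = ρ (f0 p q) ψ := by
        have h := hBv ψ
        rw [hψ] at h
        exact (sub_eq_zero.mp h.symm)
      rw [hBv, sub_eq_zero, e1v ψ, map_add, map_add, map_smul, map_smul, map_smul, hψ',
        e2v ψ]
      module
    · intro ψ hψ
      rw [LinearMap.mem_ker, ContinuousLinearMap.coe_coe] at hψ ⊢
      have hψ' : ρ (f1 p q) (ρ (fm1 p q) ψ) = ρ (f0 p q) ψ := by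
        have h := hBv ψ
        rw [hψ] at h
        exact (sub_eq_zero.mp h.symm)
      rw [hBv, sub_eq_zero]
      have h := e1v (ρ (fm1 p q) ψ)
      rw [hψ', e3v ψ] at h
      refine smul_right_injective H hq ?_
      linear_combination (norm := module) -h
    · intro ψ hψ
      rw [LinearMap.mem_ker, ContinuousLinearMap.coe_coe] at hψ ⊢
      have hψ' : ρ (f1 p q) (ρ (fm1 p q) ψ) = ρ (f0 p q) ψ := by
        have h := hBv ψ
        rw [hψ] at h
        exact (sub_eq_zero.mp h.symm)
      rw [hBv, sub_eq_zero]
      have h2 := e2v (ρ (fm1 p q) ψ)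
      rw [hψ'] at h2
      rw [e3v ψ, map_add, map_smul, map_smul, hψ']
      exact h2.symm
  -- self-adjointness of B
  have hBdef : ρ (f1 p q * fm1 p q - f0 p q) = ρ (f1 p q) * ρ (fm1 p q) - ρ (f0 p q) := by
    simp [map_sub, map_mul]
  have hBadj : ContinuousLinearMap.adjoint (ρ (f1 p q * fm1 p q - f0 p q)) =
      ρ (f1 p q * fm1 p q - f0 p q) := by
    rw [hBdef, ← ContinuousLinearMap.star_eq_adjoint, star_sub, star_mul,
      ContinuousLinearMap.star_eq_adjoint, ContinuousLinearMap.star_eq_adjoint,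
      ContinuousLinearMap.star_eq_adjoint, hstar0, hstar1, ← hstar1,
      ContinuousLinearMap.adjoint_adjoint]
  -- K₁ᗮ ≤ K₂
  have hle : (LinearMap.ker ((1 - ρ (f0 p q) : H →L[ℂ] H) : H →ₗ[ℂ] H))ᗮ ≤
      LinearMap.ker (ρ (f1 p q * fm1 p q - f0 p q) : H →ₗ[ℂ] H) := by
    intro χ hχ
    rw [LinearMap.mem_ker]
    have h1 : ⟪ρ (f1 p q * fm1 p q - f0 p q) χ, ρ (f1 p q * fm1 p q - f0 p q) χ⟫_ℂ =
        ⟪χ, ρ (f1 p q * fm1 p q - f0 p q) (ρ (f1 p q * fm1 p q - f0 p q) χ)⟫_ℂ := by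
      nth_rewrite 1 [← hBadj]
      exact ContinuousLinearMap.adjoint_inner_left _ _ _
    have h2 : ⟪χ, ρ (f1 p q * fm1 p q - f0 p q)
        (ρ (f1 p q * fm1 p q - f0 p q) χ)⟫_ℂ = 0 := by
      rw [inner_eq_zero_symm]
      exact hχ _ (hran _)
    exact inner_self_eq_zero.mp (h1.trans h2)
  -- sup is ⊤
  have hsup : LinearMap.ker ((1 - ρ (f0 p q) : H →L[ℂ] H) : H →ₗ[ℂ] H) ⊔
      (LinearMap.ker (ρ (f1 p q * fm1 p q - f0 p q) : H →ₗ[ℂ] H) ⊓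
        (LinearMap.ker ((1 - ρ (f0 p q) : H →L[ℂ] H) : H →ₗ[ℂ] H))ᗮ) = ⊤ := by
    haveI : CompleteSpace (LinearMap.ker ((1 - ρ (f0 p q) : H →L[ℂ] H) : H →ₗ[ℂ] H)) := hclosed1.completeSpace_coe
    rw [inf_eq_right.mpr hle, Submodule.sup_orthogonal_of_hasOrthogonalProjection]
  refine ⟨hclosed1, hclosed2, hinv1, hinv2, hle, hsup, ?_⟩
  intro ψ hψ χ hχ
  exact Submodule.inner_right_of_mem_orthogonal hψ hχ.2
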